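/- Let ρ be the topology on ℝ with base {U \ E : U Euclidean-open, E countable}. Then (ℝ, ρ) is totally Lindelöf. -/

import Mathlib

open Set Topology

/-- A filter base on `X`: a nonempty family of subsets of `X`, not containing `∅`,
closed under pairwise intersections. -/
def FilterBaseOn (X : Type*) (F : Set (Set X)) : Prop :=
  F.Nonempty ∧ ∅ ∉ F ∧ ∀ A ∈ F, ∀ B ∈ F, A ∩ B ∈ F

/-- `F` converges to the set `W`: every open set containing `W` contains a member of `F`. -/
def ConvergesTo {X : Type*} [TopologicalSpace X] (F : Set (Set X)) (W : Set X) : Prop :=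
  ∀ U : Set X, IsOpen U → W ⊆ U → ∃ A ∈ F, A ⊆ U

/-- `F` is total: every filter base extending `F` has nonempty adherence
(intersection of the closures of all its members). -/
def TotalFB {X : Type*} [TopologicalSpace X] (F : Set (Set X)) : Prop :=
  ∀ H : Set (Set X), FilterBaseOn X H → F ⊆ H → (⋂ A ∈ H, closure A).Nonempty

/-- `F` is stable under countable intersections: every countable subfamily of `F`
has a member of `F` contained in its intersection. -/
def StableCI {X : Type*} (F : Set (Set X)) : Prop :=
  ∀ S ⊆ F, S.Countable → ∃ H ∈ F, H ⊆ ⋂₀ S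

/-- `F` is ω-closed: the intersection of any nonempty countable subfamily of `F` belongs to `F`. -/
def OmegaClosedFB {X : Type*} (F : Set (Set X)) : Prop :=
  ∀ S ⊆ F, S.Countable → S.Nonempty → ⋂₀ S ∈ F

/-- `F` is δ-stable: every nonempty countable subfamily of `F` has nonempty intersection. -/
def DeltaStableFB {X : Type*} (F : Set (Set X)) : Prop :=
  ∀ S ⊆ F, S.Countable → S.Nonempty → (⋂₀ S).Nonempty

/-- `G_δ(K)`: the family of Gδ subsets (countable intersections of open sets) containing `K`. -/
def GdeltaNbhds {X : Type*} [TopologicalSpace X] (K : Set X) : Set (Set X) :=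
  {G | K ⊆ G ∧ IsGδ G}

/-- `F ∨ G = {F₀ ∩ F₁ : F₀, F₁ ∈ F ∪ G}`. -/
def joinFB {X : Type*} (F G : Set (Set X)) : Set (Set X) :=
  {A | ∃ F₀ ∈ F ∪ G, ∃ F₁ ∈ F ∪ G, A = F₀ ∩ F₁}

/-- `X` is totally Lindelöf: every filter base stable under countable intersections
extends to a total filter base stable under countable intersections. -/
def TotallyLindelofSpace (X : Type*) [TopologicalSpace X] : Prop :=
  ∀ F : Set (Set X), FilterBaseOn X F → StableCI F →
    ∃ H : Set (Set X), FilterBaseOn X H ∧ StableCI H ∧ F ⊆ H ∧ TotalFB H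

/-- `X` is Alster: every cover of `X` by Gδ sets such that every compact subset of `X`
is contained in a single member admits a countable subcover. -/
def AlsterSpace (X : Type*) [TopologicalSpace X] : Prop :=
  ∀ 𝒢 : Set (Set X), (∀ G ∈ 𝒢, IsGδ G) → (∀ K : Set X, IsCompact K → ∃ G ∈ 𝒢, K ⊆ G) →
    ∃ 𝒞 ⊆ 𝒢, 𝒞.Countable ∧ ⋃₀ 𝒞 = Set.univ

/-- `D` is a discrete subset: each of its points has an open neighborhood meeting `D`
only in that point. -/
def IsDiscreteSubset {X : Type*} [TopologicalSpace X] (D : Set X) : Prop :=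
  ∀ a ∈ D, ∃ U : Set X, IsOpen U ∧ U ∩ D = {a}

/-- The first uncountable ordinal ω₁. -/
noncomputable def omega1 : Ordinal := (Cardinal.aleph 1).ord

/-- The countable-complement refinement of the usual topology on `ℝ`, generated by the sets
`U \ E` with `U` Euclidean-open and `E` countable. -/
def rho : TopologicalSpace ℝ :=
  TopologicalSpace.generateFrom
    {A | ∃ (U E : Set ℝ), IsOpen U ∧ E.Countable ∧ A = U \ E}

open Filter in
lemma total_crit (H : Set (Set ℝ)) (K : Set ℝ) (hK : IsCompact K) (hKH : K ∈ H)
    (hfin : ∀ C : Set ℝ, C.Countable → ∃ B ∈ H, (B ∩ C).Finite) :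
    @TotalFB ℝ rho H := by
  intro G hG hHG
  obtain ⟨⟨G₀, hG₀⟩, hGe, hGi⟩ := hG
  set B : FilterBasis ℝ :=
    ⟨G, ⟨G₀, hG₀⟩, fun {x y} hx hy => ⟨x ∩ y, hGi x hx y hy, subset_rfl⟩⟩ with hB
  have hmem : ∀ A ∈ G, A ∈ B.filter := fun A hA => B.mem_filter_of_mem hA
  have hne : B.filter.NeBot := by
    rw [← Filter.forall_mem_nonempty_iff_neBot]
    rintro s hs
    obtain ⟨t, htG, hts⟩ := B.mem_filter_iff.mp hs
    rcases t.eq_empty_or_nonempty with rfl | ⟨x, hx⟩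
    · exact absurd htG hGe
    · exact ⟨x, hts hx⟩
  set U := Ultrafilter.of B.filter with hU
  have hUf : (U : Filter ℝ) ≤ B.filter := Ultrafilter.of_le _
  have hmemU : ∀ A ∈ G, A ∈ U := fun A hA => hUf (hmem A hA)
  by_cases hc : ∃ C ∈ U, C.Countable
  · obtain ⟨C, hCU, hCc⟩ := hc
    obtain ⟨Bf, hBfH, hBfC⟩ := hfin C hCc
    have hBfU : Bf ∈ U := hmemU _ (hHG hBfH)
    obtain ⟨x, _, hxpure⟩ := Ultrafilter.eq_pure_of_finite_mem hBfC (inter_mem hBfU hCU)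
    refine ⟨x, mem_iInter₂.mpr fun A hA => ?_⟩
    have : A ∈ U := hmemU A hA
    rw [hxpure] at this
    exact @subset_closure ℝ rho A x (Ultrafilter.mem_pure.mp this)
  · push_neg at hc
    have hKU : K ∈ U := hmemU K (hHG hKH)
    obtain ⟨x, hxK, hconv⟩ := hK.ultrafilter_le_nhds U (le_principal_iff.mpr hKU)
    have hopen : ∀ V : Set ℝ, TopologicalSpace.GenerateOpen
        {A | ∃ (U E : Set ℝ), IsOpen U ∧ E.Countable ∧ A = U \ E} V → x ∈ V → V ∈ U := by
      intro V hV
      induction hV with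
      | basic A hA =>
        intro hx
        obtain ⟨Uo, E, hUo, hEc, rfl⟩ := hA
        have h1 : Uo ∈ U := hconv (hUo.mem_nhds hx.1)
        have h2 : Eᶜ ∈ U := (Ultrafilter.compl_mem_iff_notMem).mpr (fun hE => hc E hE hEc)
        exact inter_mem h1 h2
      | univ => exact fun _ => univ_mem
      | inter V W hV1 hW1 ihV ihW => exact fun hx => inter_mem (ihV hx.1) (ihW hx.2)
      | sUnion S _ ih =>
        rintro ⟨V, hVS, hxV⟩
        exact mem_of_superset (ih V hVS hxV) (subset_sUnion_of_mem hVS)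
    refine ⟨x, mem_iInter₂.mpr fun A hA => ?_⟩
    refine (@mem_closure_iff ℝ rho x A).mpr fun o ho hxo => ?_
    exact Ultrafilter.nonempty_of_mem (inter_mem (hopen o ho hxo) (hmemU A hA))

theorem stmt9 : @TotallyLindelofSpace ℝ rho := by
  intro F hF hS
  obtain ⟨⟨F₀, hF₀⟩, hFe, hFi⟩ := hF
  by_cases hcore : ∃ x : ℝ, ∀ B ∈ F, x ∈ B
  · obtain ⟨x, hx⟩ := hcore
    refine ⟨{A | x ∈ A}, ⟨⟨univ, mem_univ x⟩, fun h => h, fun A hA B hB => ⟨hA, hB⟩⟩,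
      ?_, fun B hB => hx B hB, ?_⟩
    · intro S hS hSc
      exact ⟨⋂₀ S, fun t ht => hS ht, subset_rfl⟩
    · refine total_crit _ {x} isCompact_singleton rfl (fun C hC => ?_)
      exact ⟨{x}, rfl, (finite_singleton x).inter_of_left C⟩
  · push_neg at hcore
    -- find a bounded interval meeting every member of F
    have hbd : ∃ n : ℕ, ∀ B ∈ F, (B ∩ Icc (-(n:ℝ)) n).Nonempty := by
      by_contra h
      push_neg at h
      choose Bn hBnF hBn using h
      obtain ⟨B', hB'F, hB'⟩ := hS (range Bn) (range_subset_iff.mpr hBnF) (countable_range Bn)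
      have : B' = ∅ := by
        ext y
        simp only [mem_empty_iff_false, iff_false]
        intro hy
        obtain ⟨n, hn⟩ := exists_nat_ge |y|
        have hy2 : y ∈ Bn n ∩ Icc (-(n:ℝ)) n :=
          ⟨mem_sInter.mp (hB' hy) _ (mem_range_self n),
            by linarith [neg_abs_le y], by linarith [le_abs_self y]⟩
        rw [hBn n] at hy2
        exact hy2
      exact hFe (this ▸ hB'F)
    obtain ⟨n, hn⟩ := hbd
    set I : Set ℝ := Icc (-(n:ℝ)) n with hI
    refine ⟨{A | ∃ B ∈ F, B ∩ I ⊆ A}, ⟨⟨F₀, F₀, hF₀, inter_subset_left⟩, ?_, ?_⟩, ?_, ?_, ?_⟩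
    · rintro ⟨B, hB, hBI⟩
      exact (hn B hB).ne_empty (subset_empty_iff.mp hBI)
    · rintro A ⟨B₁, hB₁, h₁⟩ A' ⟨B₂, hB₂, h₂⟩
      exact ⟨B₁ ∩ B₂, hFi B₁ hB₁ B₂ hB₂,
        fun y hy => ⟨h₁ ⟨hy.1.1, hy.2⟩, h₂ ⟨hy.1.2, hy.2⟩⟩⟩
    · intro S hSsub hSc
      have hSsub' : ∀ A ∈ S, ∃ B ∈ F, B ∩ I ⊆ A := fun A hA => hSsub hA
      choose! Bs hBsF hBsI using hSsub'
      obtain ⟨B', hB'F, hB'⟩ := hS (Bs '' S) (by rintro _ ⟨s, hs, rfl⟩; exact hBsF s hs)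
        (hSc.image Bs)
      refine ⟨B' ∩ I, ⟨B', hB'F, subset_rfl⟩, fun y hy => ?_⟩
      rintro s hs
      exact hBsI s hs ⟨mem_sInter.mp (hB' hy.1) _ (mem_image_of_mem Bs hs), hy.2⟩
    · exact fun B hB => ⟨B, hB, inter_subset_left⟩
    · refine total_crit _ I isCompact_Icc ⟨F₀, hF₀, inter_subset_right⟩ (fun C hC => ?_)
      choose Bc hBcF hBc using fun c : ℝ => hcore c
      obtain ⟨B', hB'F, hB'⟩ := hS (Bc '' C) (by rintro _ ⟨c, hc, rfl⟩; exact hBcF c)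
        (hC.image Bc)
      refine ⟨B' ∩ I, ⟨B', hB'F, subset_rfl⟩, ?_⟩
      have : (B' ∩ I) ∩ C = ∅ := by
        ext y
        simp only [mem_empty_iff_false, iff_false]
        rintro ⟨⟨hyB, _⟩, hyC⟩
        exact hBc y (mem_sInter.mp (hB' hyB) _ (mem_image_of_mem Bc hyC))
      rw [this]; exact finite_empty
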